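/- Let α > 0 be a real number. Then the limit as n → ∞ of (1/n) · ∑_{j=0}^{n−1} log( 1 + α·cos²(πj/n) ) exists and equals 2 · log( (1 + √(1 + α)) / 2 ). -/

import Mathlib

open Filter Real Finset

theorem wheelDicot_free_energy (α : ℝ) (hα : 0 < α) :
    Filter.Tendsto
      (fun n : ℕ => (1 / (n : ℝ)) * ∑ j ∈ Finset.range n,
        Real.log (1 + α * Real.cos ((j : ℝ) * Real.pi / (n : ℝ)) ^ 2))
      Filter.atTop
      (nhds (2 * Real.log ((1 + Real.sqrt (1 + α)) / 2))) := by
  set s : ℝ := Real.sqrt (1 + α) with hs_def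
  have hs2 : s ^ 2 = 1 + α := Real.sq_sqrt (by linarith)
  have hs0 : 0 ≤ s := Real.sqrt_nonneg _
  have hs1 : 1 < s := by nlinarith
  set r : ℝ := (s - 1) / (s + 1) with hr_def
  have hr0 : 0 < r := div_pos (by linarith) (by linarith)
  have hr1 : r < 1 := (div_lt_one (by linarith)).2 (by linarith)
  set A : ℝ := ((1 + s) / 2) ^ 2 with hA_def
  have hA0 : 0 < A := by positivity
  -- pointwise identity
  have key : ∀ θ : ℝ, A * Complex.normSq (1 + (r : ℂ) * Complex.exp ((2 * θ : ℝ) * Complex.I))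
      = 1 + α * Real.cos θ ^ 2 := by
    intro θ
    have hns : Complex.normSq (1 + (r : ℂ) * Complex.exp ((2 * θ : ℝ) * Complex.I))
        = 1 + r ^ 2 + 2 * r * Real.cos (2 * θ) := by
      rw [Complex.normSq_apply]
      simp only [Complex.add_re, Complex.add_im, Complex.one_re, Complex.one_im, Complex.mul_re,
        Complex.mul_im, Complex.ofReal_re, Complex.ofReal_im, Complex.exp_ofReal_mul_I_re,
        Complex.exp_ofReal_mul_I_im, zero_mul, sub_zero, zero_add, add_zero, mul_zero]
      linear_combination r ^ 2 * (Real.sin_sq_add_cos_sq (2 * θ))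
    rw [hns, Real.cos_two_mul]
    have hα' : α = s ^ 2 - 1 := by linarith
    have h1 : s + 1 ≠ 0 := by positivity
    rw [hA_def, hα', hr_def]
    field_simp
    ring
  -- the complex product
  have hprod : ∀ n : ℕ, 0 < n →
      ∏ j ∈ Finset.range n,
        (1 + (r : ℂ) * Complex.exp ((2 * ((j : ℝ) * Real.pi / n) : ℝ) * Complex.I))
      = 1 - (-(r : ℂ)) ^ n := by
    intro n hn
    set ζ : ℂ := Complex.exp (2 * Real.pi * Complex.I / n) with hζ_def
    have hζ : IsPrimitiveRoot ζ n := Complex.isPrimitiveRoot_exp n hn.ne'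
    have hpoly := X_pow_sub_C_eq_prod hζ hn (one_pow n)
    have h1 := congrArg (Polynomial.eval ((-(r : ℂ))⁻¹)) hpoly
    simp only [Polynomial.eval_sub, Polynomial.eval_pow, Polynomial.eval_X, Polynomial.eval_C,
      Polynomial.eval_prod, Polynomial.eval_mul, mul_one] at h1
    have hrC : (r : ℂ) ≠ 0 := by exact_mod_cast hr0.ne'
    have hrr : (-(r : ℂ)) ≠ 0 := neg_ne_zero.mpr hrC
    have hexp : ∀ j ∈ Finset.range n,
        (1 + (r : ℂ) * Complex.exp ((2 * ((j : ℝ) * Real.pi / n) : ℝ) * Complex.I))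
          = (-(r : ℂ)) * ((-(r : ℂ))⁻¹ - ζ ^ j) := by
      intro j hj
      have hz : ζ ^ j = Complex.exp ((2 * ((j : ℝ) * Real.pi / n) : ℝ) * Complex.I) := by
        rw [hζ_def, ← Complex.exp_nat_mul]
        congr 1
        push_cast
        ring
      rw [hz]
      field_simp
      ring
    calc ∏ j ∈ Finset.range n,
          (1 + (r : ℂ) * Complex.exp ((2 * ((j : ℝ) * Real.pi / n) : ℝ) * Complex.I))
        = ∏ j ∈ Finset.range n, ((-(r : ℂ)) * ((-(r : ℂ))⁻¹ - ζ ^ j)) :=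
          Finset.prod_congr rfl hexp
      _ = (-(r : ℂ)) ^ n * (((-(r : ℂ))⁻¹) ^ n - 1) := by
          rw [Finset.prod_mul_distrib, Finset.prod_const, Finset.card_range, ← h1]
      _ = 1 - (-(r : ℂ)) ^ n := by
          rw [mul_sub, ← mul_pow, mul_inv_cancel₀ hrr, one_pow, mul_one]
  -- positivity of 1 - (-r)^n
  have hpos : ∀ n : ℕ, 0 < n → 0 < 1 - (-r) ^ n := by
    intro n hn
    have h1 : |(-r) ^ n| < 1 := by
      rw [abs_pow, abs_neg, abs_of_pos hr0]
      exact pow_lt_one₀ hr0.le hr1 hn.ne'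
    have := abs_lt.mp h1
    linarith [this.2]
  -- sum identity
  have hsum : ∀ n : ℕ, 0 < n →
      ∑ j ∈ Finset.range n, Real.log (1 + α * Real.cos ((j : ℝ) * Real.pi / (n : ℝ)) ^ 2)
        = n * Real.log A + 2 * Real.log (1 - (-r) ^ n) := by
    intro n hn
    have hterm : ∀ j ∈ Finset.range n,
        Real.log (1 + α * Real.cos ((j : ℝ) * Real.pi / (n : ℝ)) ^ 2)
          = Real.log A + Real.log (Complex.normSq
              (1 + (r : ℂ) * Complex.exp ((2 * ((j : ℝ) * Real.pi / n) : ℝ) * Complex.I))) := by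
      intro j hj
      have hk := key ((j : ℝ) * Real.pi / n)
      have hnsq : 0 < Complex.normSq
          (1 + (r : ℂ) * Complex.exp ((2 * ((j : ℝ) * Real.pi / n) : ℝ) * Complex.I)) := by
        nlinarith [Real.cos_sq_le_one ((j : ℝ) * Real.pi / n),
          sq_nonneg (Real.cos ((j : ℝ) * Real.pi / n)), hk]
      rw [← hk, Real.log_mul hA0.ne' hnsq.ne']
    rw [Finset.sum_congr rfl hterm, Finset.sum_add_distrib, Finset.sum_const, Finset.card_range,
      nsmul_eq_mul]
    congr 1
    have hne : ∀ j ∈ Finset.range n, Complex.normSq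
        (1 + (r : ℂ) * Complex.exp ((2 * ((j : ℝ) * Real.pi / n) : ℝ) * Complex.I)) ≠ 0 := by
      intro j hj
      have hk := key ((j : ℝ) * Real.pi / n)
      have : 0 < Complex.normSq
          (1 + (r : ℂ) * Complex.exp ((2 * ((j : ℝ) * Real.pi / n) : ℝ) * Complex.I)) := by
        nlinarith [Real.cos_sq_le_one ((j : ℝ) * Real.pi / n),
          sq_nonneg (Real.cos ((j : ℝ) * Real.pi / n))]
      exact this.ne'
    rw [← Real.log_prod hne, ← map_prod Complex.normSq, hprod n hn]
    have hcast : (1 : ℂ) - (-(r : ℂ)) ^ n = ((1 - (-r) ^ n : ℝ) : ℂ) := by push_cast; ring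
    rw [hcast, Complex.normSq_ofReal, ← sq, Real.log_pow]
    push_cast
    ring
  -- the limit
  have hlimA : Real.log A = 2 * Real.log ((1 + s) / 2) := by
    rw [hA_def, Real.log_pow]
    push_cast
    ring
  have hpow : Tendsto (fun n : ℕ => (-r) ^ n) atTop (nhds 0) := by
    apply tendsto_pow_atTop_nhds_zero_of_abs_lt_one
    rw [abs_neg, abs_of_pos hr0]
    exact hr1
  have hlog : Tendsto (fun n : ℕ => Real.log (1 - (-r) ^ n)) atTop (nhds 0) := by
    have h1 : Tendsto (fun n : ℕ => 1 - (-r) ^ n) atTop (nhds 1) := by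
      simpa using tendsto_const_nhds.sub hpow
    have := (Real.continuousAt_log (by norm_num : (1:ℝ) ≠ 0)).tendsto.comp h1
    simpa [Function.comp_def] using this
  have hg : Tendsto (fun n : ℕ => Real.log A + 2 * Real.log (1 - (-r) ^ n) * (1 / (n : ℝ)))
      atTop (nhds (Real.log A)) := by
    have h2 : Tendsto (fun n : ℕ => 2 * Real.log (1 - (-r) ^ n) * (1 / (n : ℝ)))
        atTop (nhds 0) := by
      have := ((tendsto_const_nhds.mul hlog).mul tendsto_one_div_atTop_nhds_zero_nat :
        Tendsto (fun n : ℕ => 2 * Real.log (1 - (-r) ^ n) * (1 / (n : ℝ))) atTop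
          (nhds ((2 * 0) * 0)))
      simpa using this
    simpa using (tendsto_const_nhds.add h2 :
      Tendsto _ atTop (nhds (Real.log A + 0)))
  rw [← hlimA]
  apply hg.congr'
  filter_upwards [eventually_ge_atTop 1] with n hn
  have hn0 : (0 : ℝ) < n := by exact_mod_cast hn
  rw [hsum n hn]
  field_simp
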